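/- Refined exterior lattice resolvent sum bound (Section 6): For every δ ∈ (0, 1/8] there exists a constant C > 0 such that for every k_F ∈ (0,1] there is L₀ > 0 with: for all L ≥ L₀, (1/L³) ∑_{k ∈ Λ*_L, k_F + k_F^{3/2} ≤ |k| ≤ 3 k_F} 1/(|k|² − k_F²) ≤ C k_F^{1/2 + 3δ}. (With ρ := k_F³ this is the bound C ρ^{1/6 + δ} used in the paper.) -/

import Mathlib

/-!
Refined exterior lattice resolvent sum bound (Section 6): for every `δ ∈ (0,1/8]`
there is `C > 0` such that for every `k_F ∈ (0,1]` there is `L₀ > 0` with: for all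
`L ≥ L₀`, `(1/L³) ∑_{k ∈ Λ*_L, k_F + k_F^{3/2} ≤ |k| ≤ 3 k_F} 1/(|k|² − k_F²)
≤ C k_F^{1/2 + 3δ}`, where `Λ*_L = (2π/L)ℤ³`.
-/

noncomputable section

open Real

abbrev E3 : Type := EuclideanSpace ℝ (Fin 3)

/-- The momentum lattice point `(2π/L)·n` of `Λ*_L`, for `n ∈ ℤ³`. -/
def momVec (L : ℝ) (n : Fin 3 → ℤ) : E3 :=
  ∑ j : Fin 3, (2 * π / L * (n j : ℝ)) • EuclideanSpace.single j (1 : ℝ)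

/-- The Euclidean norm `|k|` of the lattice point `(2π/L)·n`. -/
def knorm (L : ℝ) (n : Fin 3 → ℤ) : ℝ := ‖momVec L n‖

open MeasureTheory ENNReal

def nu (n : Fin 3 → ℤ) : ℝ := Real.sqrt (∑ j, ((n j : ℝ))^2)

lemma nu_nonneg (n : Fin 3 → ℤ) : 0 ≤ nu n := Real.sqrt_nonneg _

lemma momVec_apply (L : ℝ) (n : Fin 3 → ℤ) (i : Fin 3) :
    momVec L n i = 2*π/L*(n i) := by
  rw [momVec]
  rw [show ((∑ j : Fin 3, (2 * π / L * (n j : ℝ)) • EuclideanSpace.single j (1 : ℝ)) i)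
      = ∑ j : Fin 3, ((2 * π / L * (n j : ℝ)) • EuclideanSpace.single j (1 : ℝ)) i from
    by rw [WithLp.ofLp_sum]; exact Finset.sum_apply i Finset.univ _]
  simp [EuclideanSpace.single_apply]

lemma knorm_eq {L : ℝ} (hL : 0 < L) (n : Fin 3 → ℤ) :
    knorm L n = (2*π/L) * nu n := by
  have hc : 0 ≤ 2*π/L := by positivity
  rw [knorm, EuclideanSpace.norm_eq]
  rw [nu, ← Real.sqrt_sq hc, ← Real.sqrt_mul (by positivity)]
  congr 1
  rw [Finset.mul_sum]
  refine Finset.sum_congr rfl fun i _ => ?_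
  rw [momVec_apply, Real.norm_eq_abs, sq_abs]
  ring
/-- the cube of side h at lattice point n, as a subset of E3 -/
def cube (h : ℝ) (n : Fin 3 → ℤ) : Set E3 :=
  ((MeasurableEquiv.toLp 2 (Fin 3 → ℝ)).symm) ⁻¹'
    (Set.univ.pi fun j => Set.Ico (h * n j) (h * n j + h))

lemma mem_cube {h : ℝ} {n : Fin 3 → ℤ} {x : E3} :
    x ∈ cube h n ↔ ∀ j, h * n j ≤ x j ∧ x j < h * n j + h := by
  simp [cube, MeasurableEquiv.coe_toLp_symm, Set.mem_pi]

lemma volume_cube {h : ℝ} (hh : 0 ≤ h) (n : Fin 3 → ℤ) :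
    volume (cube h n) = ENNReal.ofReal (h^3) := by
  rw [cube, (EuclideanSpace.volume_preserving_symm_measurableEquiv_toLp (Fin 3)).measure_preimage
    (MeasurableSet.univ_pi (fun j => measurableSet_Ico)).nullMeasurableSet]
  rw [volume_pi_pi]
  simp [Real.volume_Ico, ← ENNReal.ofReal_pow hh]

lemma cube_disjoint {h : ℝ} (hh : 0 < h) {n m : Fin 3 → ℤ} (hnm : n ≠ m) :
    Disjoint (cube h n) (cube h m) := by
  rw [Set.disjoint_left]
  intro x hx hx'
  rw [mem_cube] at hx hx'
  apply hnm
  funext j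
  have h1 := hx j; have h2 := hx' j
  have e1 : n j = ⌊x j / h⌋ := by
    rw [eq_comm, Int.floor_eq_iff]
    constructor
    · rw [le_div_iff₀ hh]; linarith [h1.1]
    · rw [div_lt_iff₀ hh]; push_cast; linarith [h1.2]
  have e2 : m j = ⌊x j / h⌋ := by
    rw [eq_comm, Int.floor_eq_iff]
    constructor
    · rw [le_div_iff₀ hh]; linarith [h2.1]
    · rw [div_lt_iff₀ hh]; push_cast; linarith [h2.2]
  rw [e1, e2]

/-- distance from a point of the cube to the lattice point -/
lemma cube_norm_bounds {h : ℝ} (hh : 0 < h) {n : Fin 3 → ℤ} {x : E3}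
    (hx : x ∈ cube h n) :
    h * nu n - Real.sqrt 3 * h ≤ ‖x‖ ∧ ‖x‖ ≤ h * nu n + Real.sqrt 3 * h := by
  rw [mem_cube] at hx
  set y : E3 := ((MeasurableEquiv.toLp 2 (Fin 3 → ℝ)).symm).symm (fun j => h * n j) with hy
  have hyc : ∀ j, y j = h * n j := fun j => rfl
  have hny : ‖y‖ = h * nu n := by
    rw [EuclideanSpace.norm_eq]
    simp only [hyc, Real.norm_eq_abs, sq_abs]
    rw [nu, ← Real.sqrt_sq hh.le, ← Real.sqrt_mul (by positivity), Real.sqrt_sq hh.le]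
    congr 1
    rw [Finset.mul_sum]
    congr 1; funext j; ring
  have hxy : ‖x - y‖ ≤ Real.sqrt 3 * h := by
    rw [EuclideanSpace.norm_eq]
    have : ∀ j, ‖(x - y) j‖^2 ≤ h^2 := by
      intro j
      have := hx j
      rw [PiLp.sub_apply, hyc, Real.norm_eq_abs, sq_abs]
      nlinarith [this.1, this.2]
    calc Real.sqrt (∑ j, ‖(x-y) j‖^2) ≤ Real.sqrt (∑ _j : Fin 3, h^2) := by
          apply Real.sqrt_le_sqrt; exact Finset.sum_le_sum fun j _ => this j
      _ = Real.sqrt 3 * h := by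
          rw [Finset.sum_const]
          simp
          exact Real.sqrt_sq hh.le
  constructor
  · have := norm_sub_norm_le y x
    rw [norm_sub_rev] at this
    linarith [hny ▸ (norm_sub_norm_le y x), hxy, norm_sub_rev x y ▸ hxy]
  · have := norm_le_norm_add_norm_sub' x y  -- maybe wrong name
    calc ‖x‖ ≤ ‖y‖ + ‖x - y‖ := by
          have := norm_sub_norm_le x y; linarith [norm_sub_rev x y, abs_norm_sub_norm_le x y]
      _ ≤ h * nu n + Real.sqrt 3 * h := by rw [hny] at *; linarith

lemma gamma_calc : (Real.sqrt π)^(Fintype.card (Fin 3)) /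
    Real.Gamma ((Fintype.card (Fin 3)) / 2 + 1) = 4 * π / 3 := by
  rw [show ((Fintype.card (Fin 3) : ℝ)) / 2 + 1 = 3/2 + 1 by norm_num,
    Real.Gamma_add_one (by norm_num),
    show (3:ℝ)/2 = 1/2 + 1 by norm_num, Real.Gamma_add_one (by norm_num),
    Real.Gamma_one_half_eq]
  rw [show (Real.sqrt π)^(Fintype.card (Fin 3)) = (Real.sqrt π)^2 * Real.sqrt π by
    rw [Fintype.card_fin]; ring, Real.sq_sqrt Real.pi_pos.le]
  have h := Real.sqrt_pos.mpr Real.pi_pos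
  field_simp
  ring

lemma vol_closedBall_E3 {r : ℝ} (hr : 0 ≤ r) :
    volume (Metric.closedBall (0 : E3) r) = ENNReal.ofReal (4 * π / 3 * r^3) := by
  rw [EuclideanSpace.volume_closedBall, gamma_calc, ← ENNReal.ofReal_pow hr,
    ← ENNReal.ofReal_mul (by positivity)]
  congr 1
  rw [Fintype.card_fin]
  ring

lemma vol_ball_E3 {r : ℝ} (hr : 0 ≤ r) :
    volume (Metric.ball (0 : E3) r) = ENNReal.ofReal (4 * π / 3 * r^3) := by
  rw [EuclideanSpace.volume_ball, gamma_calc, ← ENNReal.ofReal_pow hr,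
    ← ENNReal.ofReal_mul (by positivity)]
  congr 1
  rw [Fintype.card_fin]
  ring

lemma cube_measurable (h : ℝ) (n : Fin 3 → ℤ) : MeasurableSet (cube h n) :=
  ((MeasurableEquiv.toLp 2 (Fin 3 → ℝ)).symm).measurable
    (MeasurableSet.univ_pi (fun _ => measurableSet_Ico))

lemma count_le {h A B : ℝ} (hh : 0 < h) (hA : Real.sqrt 3 * h ≤ A) (hAB : A ≤ B)
    (S : Finset (Fin 3 → ℤ)) (hS : ∀ n ∈ S, A ≤ h * nu n ∧ h * nu n ≤ B) :
    (S.card : ℝ) * h^3 + 4*π/3 * (A - Real.sqrt 3*h)^3 ≤ 4*π/3 * (B + Real.sqrt 3*h)^3 := by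
  set ε := Real.sqrt 3 * h with hε
  have hε0 : 0 ≤ ε := by positivity
  have hAε : 0 ≤ A - ε := by linarith
  have hBε : 0 ≤ B + ε := by linarith
  -- cubes inside closed ball, outside open ball
  have hsub : ∀ n ∈ S, cube h n ⊆ Metric.closedBall (0:E3) (B+ε) := by
    intro n hn x hx
    rw [Metric.mem_closedBall, dist_zero_right]
    have := (cube_norm_bounds hh hx).2
    have h2 := (hS n hn).2
    linarith
  have hdisj : ∀ n ∈ S, Disjoint (cube h n) (Metric.ball (0:E3) (A-ε)) := by
    intro n hn
    rw [Set.disjoint_left]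
    intro x hx hx'
    rw [Metric.mem_ball, dist_zero_right] at hx'
    have := (cube_norm_bounds hh hx).1
    have h1 := (hS n hn).1
    linarith
  have hpd : (S : Set (Fin 3 → ℤ)).PairwiseDisjoint (cube h) := by
    intro n _ m _ hnm
    exact cube_disjoint hh hnm
  have hU : volume (⋃ n ∈ S, cube h n) = (S.card : ℝ≥0∞) * ENNReal.ofReal (h^3) := by
    rw [measure_biUnion_finset hpd (fun n _ => cube_measurable h n)]
    simp [volume_cube hh.le]
  have hUd : Disjoint (⋃ n ∈ S, cube h n) (Metric.ball (0:E3) (A-ε)) := by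
    rw [Set.disjoint_left]
    intro x hx hx'
    rw [Set.mem_iUnion₂] at hx
    obtain ⟨n, hn, hxn⟩ := hx
    exact (Set.disjoint_left.mp (hdisj n hn)) hxn hx'
  have hunion : volume ((⋃ n ∈ S, cube h n) ∪ Metric.ball (0:E3) (A-ε)) =
      volume (⋃ n ∈ S, cube h n) + volume (Metric.ball (0:E3) (A-ε)) :=
    measure_union hUd measurableSet_ball
  have hmono : volume ((⋃ n ∈ S, cube h n) ∪ Metric.ball (0:E3) (A-ε)) ≤
      volume (Metric.closedBall (0:E3) (B+ε)) := by
    apply measure_mono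
    apply Set.union_subset
    · exact Set.iUnion₂_subset hsub
    · intro x hx
      rw [Metric.mem_ball] at hx
      rw [Metric.mem_closedBall]
      linarith
  rw [hunion, hU, vol_ball_E3 hAε, vol_closedBall_E3 hBε] at hmono
  have : ENNReal.ofReal ((S.card : ℝ) * h^3 + 4*π/3*(A-ε)^3) ≤
      ENNReal.ofReal (4*π/3*(B+ε)^3) := by
    rw [ENNReal.ofReal_add (by positivity) (by positivity), ENNReal.ofReal_mul (by positivity)]
    simpa using hmono
  rwa [ENNReal.ofReal_le_ofReal_iff (by positivity)] at this

lemma region_sum_bound {L A B D : ℝ} (hL : 0 < L) (hD : 0 < D)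
    (hA : Real.sqrt 3 * (2*π/L) ≤ A) (hAB : A ≤ B) (s : Finset (Fin 3 → ℤ)) :
    (1/L^3) * ∑ n ∈ s, (if A ≤ knorm L n ∧ knorm L n ≤ B then 1/D else 0) ≤
      (4*π/3) * ((B + Real.sqrt 3 * (2*π/L))^3 - (A - Real.sqrt 3 * (2*π/L))^3)
        / ((2*π)^3 * D) := by
  set h := 2*π/L with hhdef
  have hh : 0 < h := by positivity
  classical
  set S := s.filter (fun n => A ≤ knorm L n ∧ knorm L n ≤ B) with hSdef
  have hsum : ∑ n ∈ s, (if A ≤ knorm L n ∧ knorm L n ≤ B then 1/D else 0)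
      = (S.card : ℝ) * (1/D) := by
    rw [Finset.sum_ite, Finset.sum_const_zero, add_zero, Finset.sum_const, nsmul_eq_mul]
  have hcount := count_le hh hA hAB S (fun n hn => by
    have hmem := Finset.mem_filter.mp hn
    rw [← knorm_eq hL n]
    exact hmem.2)
  rw [hsum]
  have hXge : (S.card : ℝ) * h^3 ≤
      (4*π/3) * ((B + Real.sqrt 3 * h)^3 - (A - Real.sqrt 3 * h)^3) := by nlinarith [hcount]
  have heq : (1/L^3) * ((S.card : ℝ) * (1/D)) = ((S.card : ℝ) * h^3) / ((2*π)^3 * D) := by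
    rw [hhdef]
    field_simp
  rw [heq]
  exact (div_le_div_iff_of_pos_right (by positivity)).mpr hXge

lemma region_arith {t ε w g A B : ℝ} (ht0 : 0 < t) (hε0 : 0 ≤ ε)
    (hA0 : 0 ≤ A - ε) (hAB : A ≤ B) (hB : B + ε ≤ 4*t^8)
    (hw : B - A + 2*ε ≤ w) (hw0 : 0 ≤ w) (hg : 0 < g) :
    (4*π/3) * ((B+ε)^3 - (A-ε)^3) / ((2*π)^3 * (2*(t^8*g))) ≤ t^8 * w / (2*g) := by
  have hπ := Real.pi_gt_three
  have hab : A - ε ≤ B + ε := by linarith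
  have hb0 : 0 ≤ B + ε := le_trans hA0 hab
  have hb2 : (B+ε)^2 ≤ 16*t^16 := by nlinarith [pow_le_pow_left₀ hb0 hB 2]
  have hX : (B+ε)^3 - (A-ε)^3 ≤ 48*t^16*w := by
    nlinarith [sq_nonneg ((B+ε)-(A-ε)), sq_nonneg (B+ε), sq_nonneg (A-ε),
      mul_nonneg hw0 (sq_nonneg (B+ε)), hb2, hA0, hab, hw]
  have hX0 : 0 ≤ (B+ε)^3 - (A-ε)^3 := by nlinarith [pow_le_pow_left₀ hA0 hab 3]
  rw [div_le_div_iff₀ (by positivity) (by positivity)]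
  have hW : 0 ≤ t^16*w*g := by positivity
  have hc : (0:ℝ) ≤ 16*π^3 - 128*π := by nlinarith [mul_pos Real.pi_pos (show (0:ℝ) < π^2 - 9 by nlinarith [hπ])]
  have l1 : (4*π/3) * ((B+ε)^3 - (A-ε)^3) * (2*g) ≤ (4*π/3)*(48*t^16*w)*(2*g) := by
    gcongr
  have l2 : (4*π/3)*(48*t^16*w)*(2*g) ≤ t^8*w*((2*π)^3*(2*(t^8*g))) := by
    rw [show t^8*w*((2*π)^3*(2*(t^8*g))) = 16*π^3*(t^16*w*g) by ring,
      show (4*π/3)*(48*t^16*w)*(2*g) = 128*π*(t^16*w*g) by ring]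
    nlinarith [mul_nonneg hc hW]
  linarith


set_option maxHeartbeats 2000000 in
theorem refined_exterior_lattice_resolvent_sum_bound :
    ∀ δ : ℝ, δ ∈ Set.Ioc (0 : ℝ) (1 / 8) →
      ∃ C : ℝ, 0 < C ∧
        ∀ kF : ℝ, kF ∈ Set.Ioc (0 : ℝ) 1 →
          ∃ L₀ : ℝ, 0 < L₀ ∧ ∀ L : ℝ, L₀ ≤ L →
            (1 / L ^ 3) *
                ∑' n : Fin 3 → ℤ,
                  (if kF + kF ^ ((3 : ℝ) / 2) ≤ knorm L n ∧ knorm L n ≤ 3 * kF then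
                    1 / (knorm L n ^ 2 - kF ^ 2)
                  else 0)
              ≤ C * kF ^ ((1 : ℝ) / 2 + 3 * δ) := by
  intro δ hδ
  obtain ⟨hδ0, hδ8⟩ := hδ
  refine ⟨5, by norm_num, ?_⟩
  intro kF hkF
  obtain ⟨hkF0, hkF1⟩ := hkF
  refine ⟨100 / kF^2, by positivity, ?_⟩
  intro L hL
  have hL0 : 0 < L := lt_of_lt_of_le (by positivity) hL
  set t := kF ^ ((1:ℝ)/8) with htdef
  have ht0 : 0 < t := Real.rpow_pos_of_pos hkF0 _
  have ht1 : t ≤ 1 := Real.rpow_le_one hkF0.le hkF1 (by norm_num)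
  have hkF_eq : kF = t^(8:ℕ) := by
    rw [htdef, ← Real.rpow_natCast (kF ^ ((1:ℝ)/8)) 8, ← Real.rpow_mul hkF0.le]
    norm_num
  have h32 : kF ^ ((3:ℝ)/2) = t^(12:ℕ) := by
    rw [htdef, ← Real.rpow_natCast (kF ^ ((1:ℝ)/8)) 12, ← Real.rpow_mul hkF0.le]
    norm_num
  have h78 : kF ^ ((7:ℝ)/8) = t^(7:ℕ) := by
    rw [htdef, ← Real.rpow_natCast (kF ^ ((1:ℝ)/8)) 7, ← Real.rpow_mul hkF0.le]
    norm_num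
  have htpow : ∀ m k : ℕ, m ≤ k → t^k ≤ t^m :=
    fun m k hmk => pow_le_pow_of_le_one ht0.le ht1 hmk
  have e1 := htpow 12 16 (by norm_num)
  have e2 := htpow 11 16 (by norm_num)
  have e3 := htpow 10 16 (by norm_num)
  have e4 := htpow 9 16 (by norm_num)
  have e5 := htpow 8 9 (by norm_num)
  have e6 := htpow 9 10 (by norm_num)
  have e7 := htpow 10 11 (by norm_num)
  have e8 := htpow 11 12 (by norm_num)
  have e9 := htpow 8 16 (by norm_num)
  have p8 : (0:ℝ) ≤ t^8 := by positivity
  have p9 : (0:ℝ) ≤ t^9 := by positivity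
  have p10 : (0:ℝ) ≤ t^10 := by positivity
  have p11 : (0:ℝ) ≤ t^11 := by positivity
  have p12 : (0:ℝ) ≤ t^12 := by positivity
  have p16 : (0:ℝ) ≤ t^16 := by positivity
  have hε0 : 0 ≤ Real.sqrt 3 * (2*π/L) := by positivity
  have hsqrt3 : Real.sqrt 3 ≤ 2 := by
    nlinarith [Real.sq_sqrt (show (0:ℝ) ≤ 3 by norm_num), Real.sqrt_nonneg 3]
  have hLinv : 1/L ≤ kF^2/100 := by
    have h2 : (100/kF^2)*kF^2 = 100 := by field_simp
    rw [div_le_div_iff₀ hL0 (by norm_num)]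
    nlinarith [mul_le_mul_of_nonneg_right hL (sq_nonneg kF)]
  have hkF2 : kF^2 = t^(16:ℕ) := by rw [hkF_eq]; ring
  have hε16 : Real.sqrt 3 * (2*π/L) ≤ t^16/4 := by
    have hπ4 := Real.pi_le_four
    have hπ0 := Real.pi_pos
    have hinv : (0:ℝ) ≤ 1/L := by positivity
    calc Real.sqrt 3 * (2*π/L) = (Real.sqrt 3 * (2*π)) * (1/L) := by ring
      _ ≤ 16 * (1/L) := by
          apply mul_le_mul_of_nonneg_right _ hinv
          nlinarith [Real.sqrt_nonneg 3]
      _ ≤ 16 * (kF^2/100) := by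
          apply mul_le_mul_of_nonneg_left hLinv (by norm_num)
      _ ≤ t^16/4 := by linarith
  -- support finset
  set s : Finset (Fin 3 → ℤ) := Fintype.piFinset (fun _ => Finset.Icc (-⌈L⌉) ⌈L⌉) with hsdef
  have hmem : ∀ n : Fin 3 → ℤ,
      (kF + kF ^ ((3:ℝ)/2) ≤ knorm L n ∧ knorm L n ≤ 3*kF) → n ∈ s := by
    intro n hc
    rw [hsdef, Fintype.mem_piFinset]
    intro j
    rw [Finset.mem_Icc]
    have hnorm := knorm_eq hL0 n
    have h3L : 2*π*nu n ≤ 3*L := by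
      have h2' := hc.2
      rw [hnorm, div_mul_eq_mul_div, div_le_iff₀ hL0] at h2'
      nlinarith [hkF1, hL0, nu_nonneg n]
    have hν : nu n ≤ L := by
      nlinarith [mul_le_mul_of_nonneg_right Real.pi_gt_three.le (nu_nonneg n), hL0.le]
    have hj : |(n j : ℝ)| ≤ nu n := by
      rw [nu, ← Real.sqrt_sq_eq_abs]
      exact Real.sqrt_le_sqrt
        (Finset.single_le_sum (fun i _ => sq_nonneg ((n i : ℝ))) (Finset.mem_univ j))
    have habs := abs_le.mp (hj.trans hν)
    have hceil := Int.le_ceil L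
    constructor
    · have : -((⌈L⌉ : ℤ) : ℝ) ≤ (n j : ℝ) := by
        refine le_trans ?_ habs.1
        simp only [neg_le_neg_iff]
        exact hceil
      exact_mod_cast this
    · have : (n j : ℝ) ≤ ((⌈L⌉ : ℤ) : ℝ) := habs.2.trans hceil
      exact_mod_cast this
  have hsupp : ∀ n ∉ s,
      (if kF + kF ^ ((3 : ℝ) / 2) ≤ knorm L n ∧ knorm L n ≤ 3 * kF then
        1 / (knorm L n ^ 2 - kF ^ 2) else 0) = 0 := by
    intro n hn
    rw [if_neg]
    intro hcond
    exact hn (hmem n hcond)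
  rw [tsum_eq_sum hsupp]
  have hnn1 : ∀ n : Fin 3 → ℤ, 0 ≤ (if t^8+t^12 ≤ knorm L n ∧ knorm L n ≤ t^8+t^11 then 1/(2*(t^8*t^12)) else 0) := by
    intro n
    split
    · positivity
    · exact le_rfl
  have hnn2 : ∀ n : Fin 3 → ℤ, 0 ≤ (if t^8+t^11 ≤ knorm L n ∧ knorm L n ≤ t^8+t^10 then 1/(2*(t^8*t^11)) else 0) := by
    intro n
    split
    · positivity
    · exact le_rfl
  have hnn3 : ∀ n : Fin 3 → ℤ, 0 ≤ (if t^8+t^10 ≤ knorm L n ∧ knorm L n ≤ t^8+t^9 then 1/(2*(t^8*t^10)) else 0) := by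
    intro n
    split
    · positivity
    · exact le_rfl
  have hnn4 : ∀ n : Fin 3 → ℤ, 0 ≤ (if t^8+t^9 ≤ knorm L n ∧ knorm L n ≤ 3*t^8 then 1/(2*(t^8*t^9)) else 0) := by
    intro n
    split
    · positivity
    · exact le_rfl
  have hden : ∀ (x : ℝ) (m : ℕ), t^8 + t^m ≤ x → 1/(x^2 - kF^2) ≤ 1/(2*(t^8*t^m)) := by
    intro x m hm
    rw [hkF_eq]
    apply one_div_le_one_div_of_le (by positivity)
    nlinarith [pow_le_pow_left₀ (show (0:ℝ) ≤ t^8+t^m by positivity) hm 2, sq_nonneg (t^m)]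
  have hpt : ∀ n ∈ s,
      (if kF + kF ^ ((3 : ℝ) / 2) ≤ knorm L n ∧ knorm L n ≤ 3 * kF then
        1 / (knorm L n ^ 2 - kF ^ 2) else 0) ≤
      (if t^8+t^12 ≤ knorm L n ∧ knorm L n ≤ t^8+t^11 then 1/(2*(t^8*t^12)) else 0) + ((if t^8+t^11 ≤ knorm L n ∧ knorm L n ≤ t^8+t^10 then 1/(2*(t^8*t^11)) else 0) + ((if t^8+t^10 ≤ knorm L n ∧ knorm L n ≤ t^8+t^9 then 1/(2*(t^8*t^10)) else 0) + (if t^8+t^9 ≤ knorm L n ∧ knorm L n ≤ 3*t^8 then 1/(2*(t^8*t^9)) else 0))) := by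
    intro n _
    by_cases hc : kF + kF ^ ((3:ℝ)/2) ≤ knorm L n ∧ knorm L n ≤ 3*kF
    · obtain ⟨hc1, hc2⟩ := hc
      rw [if_pos ⟨hc1, hc2⟩]
      have hc1' : t^8 + t^12 ≤ knorm L n := by linarith [hkF_eq, h32]
      have hc2' : knorm L n ≤ 3*t^8 := by linarith [hkF_eq]
      rcases le_or_gt (knorm L n) (t^8+t^11) with h1 | h1
      · have e : (if t^8+t^12 ≤ knorm L n ∧ knorm L n ≤ t^8+t^11 then 1/(2*(t^8*t^12)) else 0) = 1/(2*(t^8*t^12)) := if_pos ⟨hc1', h1⟩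
        linarith [hden (knorm L n) 12 hc1', hnn2 n, hnn3 n, hnn4 n, e]
      · rcases le_or_gt (knorm L n) (t^8+t^10) with h2 | h2
        · have e : (if t^8+t^11 ≤ knorm L n ∧ knorm L n ≤ t^8+t^10 then 1/(2*(t^8*t^11)) else 0) = 1/(2*(t^8*t^11)) := if_pos ⟨h1.le, h2⟩
          linarith [hden (knorm L n) 11 h1.le, hnn1 n, hnn3 n, hnn4 n, e]
        · rcases le_or_gt (knorm L n) (t^8+t^9) with h3 | h3
          · have e : (if t^8+t^10 ≤ knorm L n ∧ knorm L n ≤ t^8+t^9 then 1/(2*(t^8*t^10)) else 0) = 1/(2*(t^8*t^10)) := if_pos ⟨h2.le, h3⟩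
            linarith [hden (knorm L n) 10 h2.le, hnn1 n, hnn2 n, hnn4 n, e]
          · have e : (if t^8+t^9 ≤ knorm L n ∧ knorm L n ≤ 3*t^8 then 1/(2*(t^8*t^9)) else 0) = 1/(2*(t^8*t^9)) := if_pos ⟨h3.le, hc2'⟩
            linarith [hden (knorm L n) 9 h3.le, hnn1 n, hnn2 n, hnn3 n, e]
    · rw [if_neg hc]
      linarith [hnn1 n, hnn2 n, hnn3 n, hnn4 n]
  have S1 : (1/L^3) * ∑ n ∈ s, (if t^8+t^12 ≤ knorm L n ∧ knorm L n ≤ t^8+t^11 then 1/(2*(t^8*t^12)) else 0) ≤ t^7 := by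
    have hR := region_sum_bound (A := t^8+t^12) (B := t^8+t^11) (D := 2*(t^8*t^12)) hL0 (by positivity)
      (by linarith) (by linarith) s
    have hA := region_arith (t := t) (ε := Real.sqrt 3 * (2*π/L)) (w := 2*t^11) (g := t^12)
      (A := t^8+t^12) (B := t^8+t^11) ht0 hε0 (by linarith) (by linarith) (by linarith) (by linarith)
      (by positivity) (by positivity)
    refine hR.trans (hA.trans (le_of_eq ?_))
    rw [div_eq_iff (by positivity)]
    ring
  have S2 : (1/L^3) * ∑ n ∈ s, (if t^8+t^11 ≤ knorm L n ∧ knorm L n ≤ t^8+t^10 then 1/(2*(t^8*t^11)) else 0) ≤ t^7 := by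
    have hR := region_sum_bound (A := t^8+t^11) (B := t^8+t^10) (D := 2*(t^8*t^11)) hL0 (by positivity)
      (by linarith) (by linarith) s
    have hA := region_arith (t := t) (ε := Real.sqrt 3 * (2*π/L)) (w := 2*t^10) (g := t^11)
      (A := t^8+t^11) (B := t^8+t^10) ht0 hε0 (by linarith) (by linarith) (by linarith) (by linarith)
      (by positivity) (by positivity)
    refine hR.trans (hA.trans (le_of_eq ?_))
    rw [div_eq_iff (by positivity)]
    ring
  have S3 : (1/L^3) * ∑ n ∈ s, (if t^8+t^10 ≤ knorm L n ∧ knorm L n ≤ t^8+t^9 then 1/(2*(t^8*t^10)) else 0) ≤ t^7 := by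
    have hR := region_sum_bound (A := t^8+t^10) (B := t^8+t^9) (D := 2*(t^8*t^10)) hL0 (by positivity)
      (by linarith) (by linarith) s
    have hA := region_arith (t := t) (ε := Real.sqrt 3 * (2*π/L)) (w := 2*t^9) (g := t^10)
      (A := t^8+t^10) (B := t^8+t^9) ht0 hε0 (by linarith) (by linarith) (by linarith) (by linarith)
      (by positivity) (by positivity)
    refine hR.trans (hA.trans (le_of_eq ?_))
    rw [div_eq_iff (by positivity)]
    ring
  have S4 : (1/L^3) * ∑ n ∈ s, (if t^8+t^9 ≤ knorm L n ∧ knorm L n ≤ 3*t^8 then 1/(2*(t^8*t^9)) else 0) ≤ (3/2)*t^7 := by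
    have hR := region_sum_bound (A := t^8+t^9) (B := 3*t^8) (D := 2*(t^8*t^9)) hL0 (by positivity)
      (by linarith) (by linarith) s
    have hA := region_arith (t := t) (ε := Real.sqrt 3 * (2*π/L)) (w := 3*t^8) (g := t^9)
      (A := t^8+t^9) (B := 3*t^8) ht0 hε0 (by linarith) (by linarith) (by linarith) (by linarith)
      (by positivity) (by positivity)
    refine hR.trans (hA.trans (le_of_eq ?_))
    rw [div_eq_iff (by positivity)]
    ring
  refine le_trans (mul_le_mul_of_nonneg_left (Finset.sum_le_sum hpt) (by positivity)) ?_
  rw [Finset.sum_add_distrib, Finset.sum_add_distrib, Finset.sum_add_distrib,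
    mul_add, mul_add, mul_add]
  refine le_trans (add_le_add S1 (add_le_add S2 (add_le_add S3 S4))) ?_
  have h5 : t^7 ≤ kF ^ ((1:ℝ)/2 + 3*δ) := by
    rw [← h78]
    exact Real.rpow_le_rpow_of_exponent_ge hkF0 hkF1 (by linarith)
  have h6 : (0:ℝ) ≤ t^7 := by positivity
  linarith
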